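/- Let A be a Dedekind domain with fraction field K, let L be a finite separable field extension of K, and let B be the integral closure of A in L (so B is a Dedekind domain with fraction field L). Let 𝒟 denote the different ideal of B over A, and let Tr_{L/K} : L → K be the field trace. Then for a nonzero fractional ideal 𝔇 of B and a nonzero fractional ideal 𝔡 of A: Tr_{L/K}(𝔇) ⊆ 𝔡 if and only if 𝔇 ⊆ 𝔡·𝒟^{−1} (where 𝔡·𝒟^{−1} denotes the fractional ideal of B obtained by extending 𝔡 to B and multiplying by the inverse of the different). -/

import Mathlib

open scoped nonZeroDivisors

/-- Let `A` be a Dedekind domain with fraction field `K`, `L` a finite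
separable extension of `K`, and `B` the integral closure of `A` in `L` (so `B` is a
Dedekind domain with fraction field `L`).  Let `𝒟 = differentIdeal A B` be the different
ideal and `Tr = Algebra.trace K L` the field trace.  Then for nonzero fractional ideals
`𝔇` of `B` and `𝔡` of `A`:  `Tr(𝔇) ⊆ 𝔡  ↔  𝔇 ⊆ 𝔡 · 𝒟⁻¹`. -/
theorem trace_fractionalIdeal_le_iff_le_mul_inv_differentIdeal
    (A K L B : Type*) [CommRing A] [Field K] [CommRing B] [Field L]
    [Algebra A K] [IsFractionRing A K]
    [Algebra B L] [IsFractionRing B L]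
    [Algebra A B] [Algebra K L] [Algebra A L]
    [IsScalarTower A K L] [IsScalarTower A B L]
    [IsIntegralClosure B A L]
    [FiniteDimensional K L] [Algebra.IsSeparable K L]
    [IsDedekindDomain A] [IsDedekindDomain B] [NoZeroSMulDivisors A B]
    (𝔇 : FractionalIdeal B⁰ L) (h𝔇 : 𝔇 ≠ 0)
    (𝔡 : FractionalIdeal A⁰ K) (h𝔡 : 𝔡 ≠ 0) :
    (∀ x ∈ 𝔇, Algebra.trace K L x ∈ 𝔡) ↔
      𝔇 ≤
        FractionalIdeal.extended L
            (nonZeroDivisors_le_comap_nonZeroDivisors_of_injective _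
              (FaithfulSMul.algebraMap_injective A B)) 𝔡 *
          ((differentIdeal A B : FractionalIdeal B⁰ L))⁻¹ := by
  classical
  have hf := nonZeroDivisors_le_comap_nonZeroDivisors_of_injective (algebraMap A B)
      (FaithfulSMul.algebraMap_injective A B)
  have hone : (1 : FractionalIdeal B⁰ L) ≠ 0 := by
    intro h
    have := FractionalIdeal.one_mem_one (S := B⁰) (P := L)
    rw [h, FractionalIdeal.mem_zero_iff] at this
    exact one_ne_zero this
  -- The localization map `K → L` is the algebra map.
  have hmap : (IsLocalization.map (S := K) L (algebraMap A B) hf : K →+* L)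
      = algebraMap K L := by
    apply IsLocalization.ringHom_ext A⁰
    rw [IsLocalization.map_comp, ← IsScalarTower.algebraMap_eq, ← IsScalarTower.algebraMap_eq]
  have hEmem : ∀ (I : FractionalIdeal A⁰ K) {c : K}, c ∈ I →
      algebraMap K L c ∈ FractionalIdeal.extended L hf I := by
    intro I c hc
    rw [FractionalIdeal.mem_extended_iff]
    exact Submodule.subset_span ⟨c, hc, by rw [hmap]⟩
  have hEspan : ∀ (I : FractionalIdeal A⁰ K),
      (FractionalIdeal.extended L hf I : Submodule B L)
        = Submodule.span B (algebraMap K L '' I) := by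
    intro I
    rw [FractionalIdeal.coe_extended_eq_span, hmap]
  have hEne : FractionalIdeal.extended L hf 𝔡 ≠ 0 := by
    obtain ⟨c, hc, hc0⟩ : ∃ c ∈ 𝔡, c ≠ 0 := by
      by_contra h
      push_neg at h
      exact h𝔡 (FractionalIdeal.eq_zero_iff.mpr fun x hx => h x hx)
    intro h0
    have := hEmem 𝔡 hc
    rw [h0, FractionalIdeal.mem_zero_iff] at this
    exact hc0 ((map_eq_zero (algebraMap K L)).mp this)
  have hEmulinv : FractionalIdeal.extended L hf 𝔡⁻¹ * FractionalIdeal.extended L hf 𝔡 = 1 := by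
    rw [← FractionalIdeal.extended_mul, inv_mul_cancel₀ h𝔡, FractionalIdeal.extended_one]
  -- Rewrite the inverse of the different ideal as the dual of 1.
  have hdual : ((differentIdeal A B : FractionalIdeal B⁰ L))⁻¹
      = FractionalIdeal.dual A K (1 : FractionalIdeal B⁰ L) := by
    rw [coeIdeal_differentIdeal A K L B, inv_inv]
  rw [hdual]
  -- Step 1: `𝔇 ≤ E 𝔡 * dual 1 ↔ E 𝔡⁻¹ * 𝔇 ≤ dual 1`.
  have step1 : 𝔇 ≤ FractionalIdeal.extended L hf 𝔡 * FractionalIdeal.dual A K 1 ↔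
      FractionalIdeal.extended L hf 𝔡⁻¹ * 𝔇 ≤ FractionalIdeal.dual A K 1 := by
    constructor
    · intro h
      calc FractionalIdeal.extended L hf 𝔡⁻¹ * 𝔇
          ≤ FractionalIdeal.extended L hf 𝔡⁻¹ *
            (FractionalIdeal.extended L hf 𝔡 * FractionalIdeal.dual A K 1) :=
            by gcongr
        _ = (FractionalIdeal.extended L hf 𝔡⁻¹ * FractionalIdeal.extended L hf 𝔡) *
            FractionalIdeal.dual A K 1 := (mul_assoc _ _ _).symm
        _ = FractionalIdeal.dual A K 1 := by rw [hEmulinv, one_mul]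
    · intro h
      calc 𝔇 = FractionalIdeal.extended L hf 𝔡 *
            (FractionalIdeal.extended L hf 𝔡⁻¹ * 𝔇) := by
              rw [← mul_assoc, mul_comm (FractionalIdeal.extended L hf 𝔡),
                hEmulinv, one_mul]
        _ ≤ FractionalIdeal.extended L hf 𝔡 * FractionalIdeal.dual A K 1 :=
            by gcongr
  rw [step1]
  -- Step 2: membership in `dual 1` amounts to traces landing in `A`.
  have step2 : FractionalIdeal.extended L hf 𝔡⁻¹ * 𝔇 ≤ FractionalIdeal.dual A K 1 ↔
      ∀ y ∈ FractionalIdeal.extended L hf 𝔡⁻¹ * 𝔇,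
        Algebra.trace K L y ∈ (algebraMap A K).range := by
    constructor
    · intro h y hy
      have := (FractionalIdeal.mem_dual hone).mp (h hy) 1
        (FractionalIdeal.one_mem_one _)
      simpa [Algebra.traceForm_apply] using this
    · intro h y hy
      show y ∈ FractionalIdeal.dual A K 1
      rw [FractionalIdeal.mem_dual hone]
      intro a ha
      rw [FractionalIdeal.mem_one_iff] at ha
      obtain ⟨b, rfl⟩ := ha
      have hby : y * algebraMap B L b ∈ FractionalIdeal.extended L hf 𝔡⁻¹ * 𝔇 := by
        have heq : y * algebraMap B L b = b • y := by
          rw [Algebra.smul_def, mul_comm]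
        rw [heq]
        exact Submodule.smul_mem
          (FractionalIdeal.extended L hf 𝔡⁻¹ * 𝔇 : FractionalIdeal B⁰ L).coeToSubmodule b hy
      simpa [Algebra.traceForm_apply] using h _ hby
  rw [step2]
  -- Step 3: the main equivalence.
  constructor
  · -- forward: traces of `𝔇` in `𝔡` imply traces of `E 𝔡⁻¹ * 𝔇` in `A`.
    intro h y hy
    have hy' : y ∈ (FractionalIdeal.extended L hf 𝔡⁻¹ : Submodule B L) * (𝔇 : Submodule B L) := by
      rwa [← FractionalIdeal.coe_mul]
    refine Submodule.mul_induction_on hy' ?_ ?_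
    · intro m hm n hn
      rw [hEspan] at hm
      induction hm using Submodule.span_induction generalizing n with
      | mem x hx =>
        obtain ⟨c, hc, rfl⟩ := hx
        have heq : Algebra.trace K L (algebraMap K L c * n) = c * Algebra.trace K L n := by
          rw [← Algebra.smul_def, map_smul, smul_eq_mul]
        rw [heq]
        have hmem : c * Algebra.trace K L n ∈ 𝔡⁻¹ * 𝔡 :=
          FractionalIdeal.mul_mem_mul hc (h n hn)
        rw [inv_mul_cancel₀ h𝔡, FractionalIdeal.mem_one_iff] at hmem
        obtain ⟨a, ha⟩ := hmem
        exact ⟨a, ha⟩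
      | zero => simpa using (RingHom.range (algebraMap A K)).zero_mem
      | add x z _ _ hx hz =>
        rw [add_mul, map_add]
        exact add_mem (hx n hn) (hz n hn)
      | smul b x _ hx =>
        have heq : (b • x) * n = x * (b • n) := by
          rw [smul_mul_assoc, mul_smul_comm]
        rw [heq]
        exact hx (b • n) (Submodule.smul_mem (𝔇 : Submodule B L) b hn)
    · intro x z hx hz
      rw [map_add]
      exact add_mem hx hz
  · -- backward: traces of `E 𝔡⁻¹ * 𝔇` in `A` imply traces of `𝔇` in `𝔡`.
    intro h x hx
    have h𝔡inv : (𝔡⁻¹ : FractionalIdeal A⁰ K) ≠ 0 := inv_ne_zero h𝔡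
    rw [← inv_inv 𝔡, FractionalIdeal.mem_inv_iff h𝔡inv]
    intro c hc
    have hmem : algebraMap K L c * x ∈ FractionalIdeal.extended L hf 𝔡⁻¹ * 𝔇 :=
      FractionalIdeal.mul_mem_mul (hEmem _ hc) hx
    have htr := h _ hmem
    have heq : Algebra.trace K L (algebraMap K L c * x) = c * Algebra.trace K L x := by
      rw [← Algebra.smul_def, map_smul, smul_eq_mul]
    rw [heq] at htr
    obtain ⟨a, ha⟩ := htr
    rw [FractionalIdeal.mem_one_iff]
    exact ⟨a, by rw [ha, mul_comm]⟩
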